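/- Let η₁, η₂ satisfy 0 < η₁ ≤ η₂ < 1 and set η = min{η₁, 1 - η₂}. Then 0 < η ≤ ½, and if pred > 0 and |ared - ered| ≤ η · pred, then: (a) ered/pred > η₂ implies ared/pred > η₂ - η ≥ 2η₂ - 1, and (b) ered/pred ≤ η₁ implies ared/pred ≤ η₁ + η ≤ 2η₁. -/
import Mathlib


theorem stmt_13 (η₁ η₂ : ℝ) (h₁ : 0 < η₁) (h₁₂ : η₁ ≤ η₂) (h₂ : η₂ < 1) :
    let η := min η₁ (1 - η₂)
    0 < η ∧ η ≤ 1 / 2 ∧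
    ∀ pred ared ered : ℝ, 0 < pred → |ared - ered| ≤ η * pred →
      ((ered / pred > η₂ → ared / pred > η₂ - η ∧ η₂ - η ≥ 2 * η₂ - 1) ∧
       (ered / pred ≤ η₁ → ared / pred ≤ η₁ + η ∧ η₁ + η ≤ 2 * η₁)) := by
  intro η
  have hη1 : η ≤ η₁ := min_le_left _ _
  have hη2 : η ≤ 1 - η₂ := min_le_right _ _
  have hηpos : 0 < η := lt_min h₁ (by linarith)
  refine ⟨hηpos, by rcases le_total η₁ (1 - η₂) with h | h <;> simp [η, min_eq_left, min_eq_right, h] <;> linarith, ?_⟩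
  intro pred ared ered hp habs
  have hb := abs_le.mp habs
  constructor
  · intro h
    have h' : η₂ * pred < ered := (lt_div_iff₀ hp).mp h
    constructor
    · rw [gt_iff_lt, lt_div_iff₀ hp]; nlinarith [hb.1]
    · linarith
  · intro h
    have h' : ered ≤ η₁ * pred := (div_le_iff₀ hp).mp h
    constructor
    · rw [div_le_iff₀ hp]; nlinarith [hb.2]
    · linarith
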